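/- Let φ : [0,∞) → [0,∞) be a quasi-concave function, and let φ̃ be its least concave majorant. Then (1/2)·φ̃(t) ≤ φ(t) ≤ φ̃(t) for all t ≥ 0; in particular (1/2)φ̃ ≤ φ ≤ 2φ̃. -/

import Mathlib

open scoped ENNReal NNReal

/-- If φ̃ is the least concave majorant of a quasi-concave function φ, then
(1/2)·φ̃(t) ≤ φ(t) ≤ φ̃(t); in particular (1/2)φ̃ ≤ φ ≤ 2φ̃. -/
theorem stmt5 (φ φt : ℝ≥0 → ℝ≥0)
    (h0 : ∀ t, φ t = 0 ↔ t = 0)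
    (hmono : MonotoneOn φ (Set.Ioi 0))
    (hdec : AntitoneOn (fun t => φ t / t) (Set.Ioi 0))
    (hconc : ConcaveOn ℝ≥0 Set.univ φt)
    (hmaj : ∀ t, φ t ≤ φt t)
    (hleast : ∀ g : ℝ≥0 → ℝ≥0, ConcaveOn ℝ≥0 Set.univ g → (∀ t, φ t ≤ g t) →
      ∀ t, φt t ≤ g t) :
    ∀ t : ℝ≥0, φt t / 2 ≤ φ t ∧ φ t ≤ φt t ∧ φ t ≤ 2 * φt t := by
  intro t
  refine ⟨?_, hmaj t, le_trans (hmaj t) (by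
    nth_rewrite 1 [← one_mul (φt t)]
    exact mul_le_mul_left one_le_two _)⟩
  by_cases ht : t = 0
  · -- show φt 0 = 0 using the modified majorant vanishing at 0
    subst ht
    set g0 : ℝ≥0 → ℝ≥0 := fun s => if s = 0 then 0 else φt s with hg0
    have hg0le : ∀ s, g0 s ≤ φt s := by
      intro s
      by_cases hs : s = 0 <;> simp [g0, hs]
    have hg0conc : ConcaveOn ℝ≥0 Set.univ g0 := by
      refine ⟨convex_univ, ?_⟩
      intro x _ y _ a b _ _ hab
      simp only [smul_eq_mul]
      by_cases h : a * x + b * y = 0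
      · have hax : a * x = 0 := by
          have := add_eq_zero.mp h
          exact this.1
        have hby : b * y = 0 := (add_eq_zero.mp h).2
        have h1 : a * g0 x = 0 := by
          rcases mul_eq_zero.mp hax with ha | hx
          · simp [ha]
          · simp [g0, hx]
        have h2 : b * g0 y = 0 := by
          rcases mul_eq_zero.mp hby with hb | hy
          · simp [hb]
          · simp [g0, hy]
        simp [h, h1, h2, g0]
      · have : g0 (a * x + b * y) = φt (a * x + b * y) := by simp [g0, h]
        rw [this]
        calc a * g0 x + b * g0 y ≤ a * φt x + b * φt y := by
              exact add_le_add (mul_le_mul_right (hg0le x) a)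
                (mul_le_mul_right (hg0le y) b)
          _ ≤ φt (a * x + b * y) := by
              have := hconc.2 (Set.mem_univ x) (Set.mem_univ y)
                zero_le zero_le hab
              simpa using this
    have hg0maj : ∀ s, φ s ≤ g0 s := by
      intro s
      by_cases hs : s = 0
      · simp [g0, hs, (h0 0).mpr rfl]
      · simp only [g0, hs, if_neg hs]
        exact hmaj s
    have h00 : φt 0 ≤ 0 := by
      have := hleast g0 hg0conc hg0maj 0
      simpa [g0] using this
    have : φt 0 = 0 := le_antisymm h00 zero_le
    simp [this, (h0 0).mpr rfl]
  · -- t > 0 : use the affine majorant s ↦ φ t + (φ t / t) * s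
    set c : ℝ≥0 := φ t / t with hc
    set g1 : ℝ≥0 → ℝ≥0 := fun s => φ t + c * s with hg1
    have hg1conc : ConcaveOn ℝ≥0 Set.univ g1 := by
      refine ⟨convex_univ, ?_⟩
      intro x _ y _ a b _ _ hab
      simp only [smul_eq_mul, g1]
      have : a * (φ t + c * x) + b * (φ t + c * y)
          = (a + b) * φ t + c * (a * x + b * y) := by ring
      rw [this, hab, one_mul]
    have hg1maj : ∀ s, φ s ≤ g1 s := by
      intro s
      by_cases hs : s = 0
      · rw [hs, (h0 0).mpr rfl]; exact zero_le
      · rcases le_or_gt s t with hst | hts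
        · have : φ s ≤ φ t := hmono (Set.mem_Ioi.mpr (pos_iff_ne_zero.mpr hs))
            (Set.mem_Ioi.mpr (pos_iff_ne_zero.mpr ht)) hst
          exact le_trans this (le_add_right le_rfl)
        · have hd : φ s / s ≤ c := hdec (Set.mem_Ioi.mpr (pos_iff_ne_zero.mpr ht))
            (Set.mem_Ioi.mpr (pos_iff_ne_zero.mpr hs)) hts.le
          have : φ s = (φ s / s) * s := (div_mul_cancel₀ _ hs).symm
          rw [this]
          calc (φ s / s) * s ≤ c * s := mul_le_mul_left hd s
            _ ≤ φ t + c * s := le_add_self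
    have hkey : φt t ≤ 2 * φ t := by
      have := hleast g1 hg1conc hg1maj t
      have hct : c * t = φ t := by
        rw [hc, div_mul_cancel₀ _ ht]
      calc φt t ≤ g1 t := this
        _ = φ t + c * t := rfl
        _ = 2 * φ t := by rw [hct, two_mul]
    rw [div_le_iff₀ (two_pos)]
    calc φt t ≤ 2 * φ t := hkey
      _ = φ t * 2 := mul_comm _ _
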